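/- Let M ≥ 0 be an integer and let 0 < λ_1 < λ_2 < ⋯ < λ_{M+1} be real numbers. Define A_k := 1 / ∏_{i=1, i≠k}^{M+1} (λ_i − λ_k) for k = 1, …, M+1, and q(s) := Σ_{i=1}^{M+1} A_i e^{−λ_i s} for s ∈ ℝ. Then q^{(j)}(0) = 0 for every 0 ≤ j ≤ M−1, q^{(M)}(0) = 1, and for every s > 0 one has 0 < q(s) ≤ (s^M / M!) e^{−λ_1 s}. -/

import Mathlib

open Finset intervalIntegral

open Polynomial in
lemma lagrange_coeff_sum {s : Finset ℕ} {v : ℕ → ℝ} (hvs : Set.InjOn v s) {N j : ℕ}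
    (hcard : s.card = N + 1) (hj : j ≤ N) :
    ∑ i ∈ s, v i ^ j * ∏ k ∈ s.erase i, (v i - v k)⁻¹ = if j = N then 1 else 0 := by
  have hdeg : ((X : ℝ[X]) ^ j).degree < s.card := by
    rw [degree_X_pow, hcard]; exact_mod_cast Nat.lt_succ_of_le hj
  have h := Lagrange.eq_interpolate (f := (X : ℝ[X]) ^ j) hvs hdeg
  have hb : ∀ i ∈ s, (Lagrange.basis s v i).coeff N = ∏ k ∈ s.erase i, (v i - v k)⁻¹ := by
    intro i hi
    have hnd : (Lagrange.basis s v i).natDegree = N := by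
      rw [Lagrange.natDegree_basis hvs hi, hcard]; omega
    rw [← hnd, coeff_natDegree, Lagrange.basis, leadingCoeff_prod]
    refine Finset.prod_congr rfl fun k _ => ?_
    rw [Lagrange.basisDivisor, leadingCoeff_mul, leadingCoeff_C, leadingCoeff_X_sub_C, mul_one]
  have h2 := congrArg (fun p => Polynomial.coeff p N) h
  simp only [Lagrange.interpolate_apply, Polynomial.finset_sum_coeff, coeff_C_mul,
    coeff_X_pow, eval_pow, eval_X] at h2
  rw [Finset.sum_congr rfl (fun i hi => by rw [hb i hi])] at h2
  rw [← h2]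
  by_cases hjN : j = N <;> simp [hjN, Ne.symm, eq_comm]

lemma iteratedDeriv_expsum (t : Finset ℕ) (A lam : ℕ → ℝ) (j : ℕ) :
    iteratedDeriv j (fun s => ∑ i ∈ t, A i * Real.exp (-lam i * s)) =
    fun s => ∑ i ∈ t, A i * (-lam i) ^ j * Real.exp (-lam i * s) := by
  induction j with
  | zero => simp
  | succ j ih =>
    rw [iteratedDeriv_succ, ih]
    funext x
    have hd : HasDerivAt (fun s => ∑ i ∈ t, A i * (-lam i) ^ j * Real.exp (-lam i * s))
        (∑ i ∈ t, A i * (-lam i) ^ (j + 1) * Real.exp (-lam i * x)) x := by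
      have : ∀ i ∈ t, HasDerivAt (fun s => A i * (-lam i) ^ j * Real.exp (-lam i * s))
          (A i * (-lam i) ^ (j + 1) * Real.exp (-lam i * x)) x := by
        intro i _
        have h1 : HasDerivAt (fun s : ℝ => -lam i * s) (-lam i) x := by
          simpa using (hasDerivAt_id x).const_mul (-lam i)
        have h3 := (h1.exp).const_mul (A i * (-lam i) ^ j)
        refine h3.congr_deriv ?_
        ring
      exact HasDerivAt.fun_sum this
    exact hd.deriv

noncomputable def Qcoef (lam : ℕ → ℝ) (M : ℕ) (i : ℕ) : ℝ :=
  1 / ∏ k ∈ (Finset.Icc 1 (M + 1)).erase i, (lam k - lam i)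

noncomputable def Qf (lam : ℕ → ℝ) (M : ℕ) : ℝ → ℝ :=
  fun s => ∑ i ∈ Finset.Icc 1 (M + 1), Qcoef lam M i * Real.exp (-lam i * s)

lemma lam_chain (lam : ℕ → ℝ) (M : ℕ) (hmono : ∀ i, 1 ≤ i → i ≤ M → lam i < lam (i + 1)) :
    ∀ i j, 1 ≤ i → i < j → j ≤ M + 1 → lam i < lam j := by
  intro i j h1 hij hj
  induction j with
  | zero => omega
  | succ j ih =>
    rcases Nat.lt_or_ge i j with h | h
    · exact (ih (by omega) (by omega)).trans (hmono j (by omega) (by omega))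
    · have : i = j := by omega
      subst this
      exact hmono i (by omega) (by omega)

lemma lam_inj (lam : ℕ → ℝ) (M : ℕ) (hmono : ∀ i, 1 ≤ i → i ≤ M → lam i < lam (i + 1)) :
    Set.InjOn lam (Finset.Icc 1 (M + 1)) := by
  intro a ha b hb hab
  simp only [coe_Icc, Set.mem_Icc] at ha hb
  by_contra hne
  rcases Nat.lt_or_ge a b with h | h
  · exact absurd hab (ne_of_lt (lam_chain lam M hmono a b ha.1 h hb.2))
  · have h' : b < a := by omega
    exact absurd hab.symm (ne_of_lt (lam_chain lam M hmono b a hb.1 (by omega) ha.2))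

lemma Qcoef_eq (lam : ℕ → ℝ) (M : ℕ) {i : ℕ} (hi : i ∈ Finset.Icc 1 (M + 1)) :
    Qcoef lam M i = (-1 : ℝ) ^ M * ∏ k ∈ (Finset.Icc 1 (M + 1)).erase i, (lam i - lam k)⁻¹ := by
  have hcard : ((Finset.Icc 1 (M + 1)).erase i).card = M := by
    rw [Finset.card_erase_of_mem hi, Nat.card_Icc]; omega
  rw [Qcoef, one_div, ← Finset.prod_inv_distrib]
  have : ∀ k ∈ (Finset.Icc 1 (M + 1)).erase i, (lam k - lam i)⁻¹ = -(lam i - lam k)⁻¹ := by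
    intro k _; rw [← inv_neg, neg_sub]
  rw [Finset.prod_congr rfl this]
  simp only [neg_eq_neg_one_mul ((lam i - _)⁻¹)]
  rw [Finset.prod_mul_distrib, Finset.prod_const, hcard]

lemma sum_pow_Qcoef (lam : ℕ → ℝ) (M : ℕ) (hmono : ∀ i, 1 ≤ i → i ≤ M → lam i < lam (i + 1))
    {j : ℕ} (hj : j ≤ M) :
    ∑ i ∈ Finset.Icc 1 (M + 1), lam i ^ j * Qcoef lam M i =
      (-1 : ℝ) ^ M * (if j = M then 1 else 0) := by
  have hcard : (Finset.Icc 1 (M + 1)).card = M + 1 := by rw [Nat.card_Icc]; omega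
  have hkey := lagrange_coeff_sum (lam_inj lam M hmono) hcard hj
  rw [← hkey, Finset.mul_sum]
  refine Finset.sum_congr rfl fun i hi => ?_
  rw [Qcoef_eq lam M hi]; ring

lemma integral_exp_aff (a b : ℝ) (ha : a ≠ 0) (s : ℝ) :
    ∫ u in (0:ℝ)..s, Real.exp (a * u + b) = (Real.exp (a * s + b) - Real.exp b) / a := by
  have hF : ∀ u ∈ Set.uIcc (0:ℝ) s, HasDerivAt (fun u => Real.exp (a * u + b) / a)
      (Real.exp (a * u + b)) u := by
    intro u _
    have h1 : HasDerivAt (fun u : ℝ => a * u + b) a u := by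
      simpa using ((hasDerivAt_id u).const_mul a).add_const b
    have := (h1.exp).div_const a
    refine this.congr_deriv ?_
    field_simp
  have hcont : IntervalIntegrable (fun u => Real.exp (a * u + b)) MeasureTheory.volume 0 s :=
    (Real.continuous_exp.comp (by continuity)).intervalIntegrable 0 s
  rw [integral_eq_sub_of_hasDerivAt hF hcont]
  simp [mul_zero, zero_add]
  ring

lemma Qcoef_step (lam : ℕ → ℝ) (M : ℕ) {i : ℕ} (hi : i ∈ Finset.Icc 1 (M + 1)) :
    Qcoef lam (M + 1) i = Qcoef lam M i / (lam (M + 2) - lam i) := by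
  have hset : (Finset.Icc 1 (M + 2)).erase i =
      insert (M + 2) ((Finset.Icc 1 (M + 1)).erase i) := by
    simp only [Finset.mem_Icc] at hi
    ext k
    simp only [Finset.mem_erase, Finset.mem_Icc, Finset.mem_insert]
    omega
  have hnotmem : (M + 2) ∉ (Finset.Icc 1 (M + 1)).erase i := by
    simp [Finset.mem_erase, Finset.mem_Icc]
  rw [Qcoef, Qcoef, hset, Finset.prod_insert hnotmem]
  rw [one_div, one_div, mul_inv, mul_comm, ← div_eq_mul_inv]

lemma Qf_cont (lam : ℕ → ℝ) (M : ℕ) : Continuous (Qf lam M) := by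
  unfold Qf
  exact continuous_finset_sum _ fun i _ =>
    continuous_const.mul (Real.continuous_exp.comp (continuous_const.mul continuous_id))

lemma Qf_rec (lam : ℕ → ℝ) (M : ℕ)
    (hmono : ∀ i, 1 ≤ i → i ≤ M + 1 → lam i < lam (i + 1)) (s : ℝ) :
    Qf lam (M + 1) s = ∫ u in (0:ℝ)..s, Real.exp (-lam (M + 2) * (s - u)) * Qf lam M u := by
  have hlt : ∀ i ∈ Finset.Icc 1 (M + 1), lam i < lam (M + 2) := by
    intro i hi
    simp only [Finset.mem_Icc] at hi
    exact lam_chain lam (M + 1) hmono i (M + 2) hi.1 (by omega) (by omega)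
  have hc : ∀ i ∈ Finset.Icc 1 (M + 1), lam (M + 2) - lam i ≠ 0 := fun i hi =>
    sub_ne_zero_of_ne (ne_of_gt (hlt i hi))
  have hRHS : (∫ u in (0:ℝ)..s, Real.exp (-lam (M + 2) * (s - u)) * Qf lam M u) =
      ∑ i ∈ Finset.Icc 1 (M + 1), Qcoef lam M i *
        ((Real.exp (-lam i * s) - Real.exp (-lam (M + 2) * s)) / (lam (M + 2) - lam i)) := by
    have heq : ∀ u : ℝ, Real.exp (-lam (M + 2) * (s - u)) * Qf lam M u =
        ∑ i ∈ Finset.Icc 1 (M + 1), Qcoef lam M i *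
          Real.exp ((lam (M + 2) - lam i) * u + (-lam (M + 2) * s)) := by
      intro u
      rw [Qf, Finset.mul_sum]
      refine Finset.sum_congr rfl fun i _ => ?_
      rw [show ((lam (M + 2) - lam i) * u + -lam (M + 2) * s)
          = -lam (M + 2) * (s - u) + -lam i * u by ring, Real.exp_add]
      ring
    calc (∫ u in (0:ℝ)..s, Real.exp (-lam (M + 2) * (s - u)) * Qf lam M u)
        = ∫ u in (0:ℝ)..s, ∑ i ∈ Finset.Icc 1 (M + 1), Qcoef lam M i *
            Real.exp ((lam (M + 2) - lam i) * u + (-lam (M + 2) * s)) := by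
          refine intervalIntegral.integral_congr fun u _ => heq u
      _ = ∑ i ∈ Finset.Icc 1 (M + 1), ∫ u in (0:ℝ)..s, Qcoef lam M i *
            Real.exp ((lam (M + 2) - lam i) * u + (-lam (M + 2) * s)) := by
          refine intervalIntegral.integral_finset_sum fun i _ => ?_
          exact (continuous_const.mul (Real.continuous_exp.comp (by continuity))).intervalIntegrable 0 s
      _ = ∑ i ∈ Finset.Icc 1 (M + 1), Qcoef lam M i *
            ((Real.exp (-lam i * s) - Real.exp (-lam (M + 2) * s)) / (lam (M + 2) - lam i)) := by
          refine Finset.sum_congr rfl fun i hi => ?_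
          rw [intervalIntegral.integral_const_mul, integral_exp_aff _ _ (hc i hi)]
          rw [show (lam (M + 2) - lam i) * s + -lam (M + 2) * s = -lam i * s by ring]
  have hsum0 : ∑ i ∈ Finset.Icc 1 (M + 2), Qcoef lam (M + 1) i = 0 := by
    have h := sum_pow_Qcoef lam (M + 1) hmono (j := 0) (by omega)
    simpa using h
  rw [hRHS, Qf]
  rw [show M + 1 + 1 = M + 2 from rfl, Finset.sum_Icc_succ_top (by omega : 1 ≤ M + 2)]
  have hlast : Qcoef lam (M + 1) (M + 2)
      = -∑ i ∈ Finset.Icc 1 (M + 1), Qcoef lam (M + 1) i := by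
    have h := hsum0
    rw [Finset.sum_Icc_succ_top (by omega : 1 ≤ M + 2)] at h
    linarith
  rw [hlast]
  calc (∑ i ∈ Finset.Icc 1 (M + 1), Qcoef lam (M + 1) i * Real.exp (-lam i * s))
        + (-∑ i ∈ Finset.Icc 1 (M + 1), Qcoef lam (M + 1) i) * Real.exp (-lam (M + 2) * s)
      = ∑ i ∈ Finset.Icc 1 (M + 1), (Qcoef lam (M + 1) i * Real.exp (-lam i * s)
          - Qcoef lam (M + 1) i * Real.exp (-lam (M + 2) * s)) := by
        rw [Finset.sum_sub_distrib, neg_mul, ← Finset.sum_mul]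
        ring
    _ = ∑ i ∈ Finset.Icc 1 (M + 1), Qcoef lam M i *
          ((Real.exp (-lam i * s) - Real.exp (-lam (M + 2) * s)) / (lam (M + 2) - lam i)) := by
        refine Finset.sum_congr rfl fun i hi => ?_
        rw [Qcoef_step lam M hi]
        ring

lemma Qf_zero (lam : ℕ → ℝ) (M : ℕ) (hmono : ∀ i, 1 ≤ i → i ≤ M → lam i < lam (i + 1)) :
    Qf lam M 0 = if M = 0 then 1 else 0 := by
  have h := sum_pow_Qcoef lam M hmono (j := 0) (by omega)
  simp only [pow_zero, one_mul] at h
  rw [Qf]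
  simp only [mul_zero, Real.exp_zero, mul_one]
  rw [h]
  rcases Nat.eq_zero_or_pos M with h0 | h0
  · simp [h0]
  · have : M ≠ 0 := by omega
    simp [this, eq_comm, Ne.symm this]

lemma Qf_bound (lam : ℕ → ℝ) :
    ∀ M : ℕ, (∀ i, 1 ≤ i → i ≤ M → lam i < lam (i + 1)) → ∀ s : ℝ, 0 < s →
      0 < Qf lam M s ∧ Qf lam M s ≤ s ^ M / (Nat.factorial M : ℝ) * Real.exp (-lam 1 * s) := by
  intro M
  induction M with
  | zero =>
    intro _ s hs
    have hQ : Qf lam 0 s = Real.exp (-lam 1 * s) := by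
      rw [Qf]
      simp [Qcoef]
    rw [hQ]
    exact ⟨Real.exp_pos _, by simp⟩
  | succ M ih =>
    intro hmono s hs
    have hmonoM : ∀ i, 1 ≤ i → i ≤ M → lam i < lam (i + 1) := fun i h1 h2 =>
      hmono i h1 (by omega)
    have hrec := Qf_rec lam M hmono s
    have hcont : Continuous fun u => Real.exp (-lam (M + 2) * (s - u)) * Qf lam M u := by
      exact (Real.continuous_exp.comp (by continuity)).mul (Qf_cont lam M)
    have h1M2 : lam 1 ≤ lam (M + 2) :=
      le_of_lt (lam_chain lam (M + 1) hmono 1 (M + 2) le_rfl (by omega) (by omega))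
    have hQnn : ∀ u ∈ Set.Icc (0:ℝ) s,
        0 ≤ Qf lam M u ∧ Qf lam M u ≤ u ^ M / (Nat.factorial M : ℝ) * Real.exp (-lam 1 * u) := by
      intro u hu
      rcases eq_or_lt_of_le hu.1 with h0 | h0
      · rw [← h0, Qf_zero lam M hmonoM]
        rcases Nat.eq_zero_or_pos M with hM | hM
        · simp [hM]
        · have : M ≠ 0 := by omega
          simp [this]
      · exact ⟨(ih hmonoM u h0).1.le, (ih hmonoM u h0).2⟩
    constructor
    · rw [hrec]
      refine intervalIntegral_pos_of_pos_on (hcont.intervalIntegrable 0 s) ?_ hs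
      intro x hx
      exact mul_pos (Real.exp_pos _) (ih hmonoM x hx.1).1
    · rw [hrec]
      have hmono_pt : ∀ u ∈ Set.Icc (0:ℝ) s,
          Real.exp (-lam (M + 2) * (s - u)) * Qf lam M u
            ≤ Real.exp (-lam 1 * s) * (u ^ M / (Nat.factorial M : ℝ)) := by
        intro u hu
        have hsu : 0 ≤ s - u := by linarith [hu.2]
        have he : Real.exp (-lam (M + 2) * (s - u)) ≤ Real.exp (-lam 1 * (s - u)) := by
          apply Real.exp_le_exp.mpr
          nlinarith
        have h2 := (hQnn u hu).2
        calc Real.exp (-lam (M + 2) * (s - u)) * Qf lam M u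
            ≤ Real.exp (-lam 1 * (s - u)) * (u ^ M / (Nat.factorial M : ℝ) * Real.exp (-lam 1 * u)) := by
              apply mul_le_mul he h2 (hQnn u hu).1 (Real.exp_pos _).le
          _ = Real.exp (-lam 1 * s) * (u ^ M / (Nat.factorial M : ℝ)) := by
              rw [show -lam 1 * s = -lam 1 * (s - u) + -lam 1 * u by ring, Real.exp_add]
              ring
      calc (∫ u in (0:ℝ)..s, Real.exp (-lam (M + 2) * (s - u)) * Qf lam M u)
          ≤ ∫ u in (0:ℝ)..s, Real.exp (-lam 1 * s) * (u ^ M / (Nat.factorial M : ℝ)) := by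
            refine intervalIntegral.integral_mono_on hs.le (hcont.intervalIntegrable 0 s)
              ((continuous_const.mul ((continuous_pow M).div_const _)).intervalIntegrable 0 s)
              hmono_pt
        _ = s ^ (M + 1) / (Nat.factorial (M + 1) : ℝ) * Real.exp (-lam 1 * s) := by
            rw [intervalIntegral.integral_const_mul, intervalIntegral.integral_div,
              integral_pow]
            rw [Nat.factorial_succ, Nat.cast_mul]
            have hfac : (Nat.factorial M : ℝ) ≠ 0 := Nat.cast_ne_zero.mpr (Nat.factorial_ne_zero M)
            have hM1 : ((M : ℝ) + 1) ≠ 0 := by positivity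
            field_simp
            push_cast; ring

theorem guichal_sum_of_exponentials (M : ℕ) (lam : ℕ → ℝ) (hl1 : 0 < lam 1)
    (hmono : ∀ i, 1 ≤ i → i ≤ M → lam i < lam (i + 1)) :
    let A : ℕ → ℝ := fun k => 1 / ∏ i ∈ (Finset.Icc 1 (M + 1)).erase k, (lam i - lam k)
    let q : ℝ → ℝ := fun s => ∑ i ∈ Finset.Icc 1 (M + 1), A i * Real.exp (-lam i * s)
    (∀ j, j < M → iteratedDeriv j q 0 = 0) ∧
    iteratedDeriv M q 0 = 1 ∧
    (∀ s : ℝ, 0 < s →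
      0 < q s ∧ q s ≤ s ^ M / (Nat.factorial M : ℝ) * Real.exp (-lam 1 * s)) := by
  intro A q
  have hq : q = Qf lam M := rfl
  have hder : ∀ j : ℕ, iteratedDeriv j q 0
      = ∑ i ∈ Finset.Icc 1 (M + 1), Qcoef lam M i * (-lam i) ^ j := by
    intro j
    rw [hq]; unfold Qf; rw [iteratedDeriv_expsum]
    simp
  have hkey : ∀ j : ℕ, j ≤ M →
      ∑ i ∈ Finset.Icc 1 (M + 1), Qcoef lam M i * (-lam i) ^ j
        = (-1 : ℝ) ^ (j + M) * (if j = M then 1 else 0) := by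
    intro j hj
    have h := sum_pow_Qcoef lam M hmono hj
    calc ∑ i ∈ Finset.Icc 1 (M + 1), Qcoef lam M i * (-lam i) ^ j
        = (-1 : ℝ) ^ j * ∑ i ∈ Finset.Icc 1 (M + 1), lam i ^ j * Qcoef lam M i := by
          rw [Finset.mul_sum]
          refine Finset.sum_congr rfl fun i _ => ?_
          rw [neg_pow]
          ring
      _ = (-1 : ℝ) ^ j * ((-1 : ℝ) ^ M * (if j = M then 1 else 0)) := by rw [h]
      _ = (-1 : ℝ) ^ (j + M) * (if j = M then 1 else 0) := by rw [pow_add]; ring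
  refine ⟨?_, ?_, ?_⟩
  · intro j hj
    rw [hder j, hkey j hj.le]
    simp [Nat.ne_of_lt hj]
  · rw [hder M, hkey M le_rfl]
    simp [← two_mul, pow_mul]
  · intro s hs
    rw [hq]
    exact Qf_bound lam M hmono s hs
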